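/- Let L be a field of characteristic different from 2. For n ≥ 1 let N_n ∈ M_n(L) be the matrix with (N_n)_{i,j} = 1 if i = j−1 and (N_n)_{i,j} = 0 otherwise. Let l ≥ 0 and let m_1, …, m_l ≥ 0 be integers, and let N = diag(N_1, …, N_1, …, N_l, …, N_l) be the block-diagonal matrix in which each block N_n is repeated m_n times. Then there exists an invertible skew-symmetric matrix A (i.e. Aᵀ = −A) over L with A·N = −Nᵀ·A if and only if m_n is even for every odd n with 1 ≤ n ≤ l. -/

import Mathlib

open Matrix

/-- The `k × k` Jordan nilpotent block `N_k` over `L`, with entries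
`(N_k)_{i,j} = 1` if `i = j - 1` (i.e. `i + 1 = j`) and `0` otherwise. -/
def jordanNilBlock (L : Type*) [Zero L] [One L] (k : ℕ) : Matrix (Fin k) (Fin k) L :=
  fun i j => if (i : ℕ) + 1 = (j : ℕ) then 1 else 0

/-- The block-diagonal matrix `N = N(m_1, …, m_l)` in which, for each `1 ≤ n ≤ l`,
the Jordan block `N_n` is repeated `m_n` times (the index `p : Fin l` corresponds
to the block size `p + 1`). -/
def jordanNilMatrix (L : Type*) [Zero L] [One L] (l : ℕ) (m : Fin l → ℕ) :
    Matrix (Σ p : Σ n : Fin l, Fin (m n), Fin ((p.1 : ℕ) + 1))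
           (Σ p : Σ n : Fin l, Fin (m n), Fin ((p.1 : ℕ) + 1)) L :=
  Matrix.blockDiagonal' fun p : Σ n : Fin l, Fin (m n) =>
    jordanNilBlock L ((p.1 : ℕ) + 1)

/-- Let `L` be a field of characteristic `≠ 2` and let `N = N(m_1, …, m_l)` be the
block-diagonal nilpotent matrix with `m_n` copies of the Jordan block `N_n` for
`1 ≤ n ≤ l`.  Then there exists an invertible skew-symmetric matrix `A` over `L` with
`A * N = -(Nᵀ * A)` if and only if `m_n` is even for every odd `n` with
`1 ≤ n ≤ l`. -/

abbrev JIdx (l : ℕ) (m : Fin l → ℕ) := Σ p : Σ n : Fin l, Fin (m n), Fin ((p.1 : ℕ) + 1)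

lemma JIdx.ext {l : ℕ} {m : Fin l → ℕ} {x y : JIdx l m}
    (h1 : (x.1.1 : ℕ) = (y.1.1 : ℕ)) (h2 : (x.1.2 : ℕ) = (y.1.2 : ℕ))
    (h3 : (x.2 : ℕ) = (y.2 : ℕ)) : x = y := by
  rcases x with ⟨⟨n, c⟩, i⟩
  rcases y with ⟨⟨n', c'⟩, j⟩
  simp only at h1 h2 h3
  have hn : n = n' := Fin.ext h1
  subst hn
  have hc : c = c' := Fin.ext h2
  subst hc
  have hi : i = j := Fin.ext h3
  subst hi
  rfl

lemma jordanNilMatrix_apply {L : Type*} [Field L] {l : ℕ} {m : Fin l → ℕ} (x y : JIdx l m) :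
    jordanNilMatrix L l m x y
      = if x.1 = y.1 ∧ (x.2 : ℕ) + 1 = (y.2 : ℕ) then 1 else 0 := by
  rcases x with ⟨p, i⟩
  rcases y with ⟨q, j⟩
  rw [jordanNilMatrix, blockDiagonal'_apply]
  by_cases h : p = q
  · subst h
    simp only [dif_pos rfl, if_pos, cast_eq]
    rw [jordanNilBlock]
    simp
  · rw [dif_neg h, if_neg]
    rintro ⟨h', -⟩
    exact h h'

section
variable {L : Type*} [Field L] {l : ℕ} {m : Fin l → ℕ}

/-- predecessor index within a block -/
def JIdx.pred {l : ℕ} {m : Fin l → ℕ} (z : JIdx l m) : JIdx l m :=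
  ⟨z.1, ⟨(z.2 : ℕ) - 1, by omega⟩⟩

lemma mul_jordan_apply (M : Matrix (JIdx l m) (JIdx l m) L) (x z : JIdx l m) :
    (M * jordanNilMatrix L l m) x z
      = if 0 < (z.2 : ℕ) then M x z.pred else 0 := by
  rw [Matrix.mul_apply]
  by_cases hz : 0 < (z.2 : ℕ)
  · rw [if_pos hz]
    apply Fintype.sum_eq_single z.pred ?_ |>.trans ?_
    · intro y hy
      rw [jordanNilMatrix_apply, if_neg, mul_zero]
      rintro ⟨h1, h2⟩
      exact hy (JIdx.ext (by rw [h1]; rfl) (by rw [h1]; rfl) (by simp [JIdx.pred]; omega))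
    · rw [jordanNilMatrix_apply, if_pos ⟨rfl, by simp [JIdx.pred]; omega⟩, mul_one]
  · rw [if_neg hz]
    apply Finset.sum_eq_zero
    intro y _
    rw [jordanNilMatrix_apply, if_neg, mul_zero]
    rintro ⟨-, h2⟩
    omega

lemma jordanT_mul_apply (M : Matrix (JIdx l m) (JIdx l m) L) (x z : JIdx l m) :
    ((jordanNilMatrix L l m)ᵀ * M) x z
      = if 0 < (x.2 : ℕ) then M x.pred z else 0 := by
  rw [Matrix.mul_apply]
  by_cases hx : 0 < (x.2 : ℕ)
  · rw [if_pos hx]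
    apply Fintype.sum_eq_single x.pred ?_ |>.trans ?_
    · intro y hy
      rw [transpose_apply, jordanNilMatrix_apply, if_neg, zero_mul]
      rintro ⟨h1, h2⟩
      exact hy (JIdx.ext (by rw [h1]; rfl) (by rw [h1]; rfl) (by simp [JIdx.pred]; omega))
    · rw [transpose_apply, jordanNilMatrix_apply, if_pos ⟨rfl, by simp [JIdx.pred]; omega⟩,
        one_mul]
  · rw [if_neg hx]
    apply Finset.sum_eq_zero
    intro y _
    rw [transpose_apply, jordanNilMatrix_apply, if_neg, zero_mul]
    rintro ⟨-, h2⟩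
    omega

/-- `N ^ k` -/
def shiftPow (L : Type*) [Field L] (l : ℕ) (m : Fin l → ℕ) (k : ℕ) :
    Matrix (JIdx l m) (JIdx l m) L :=
  fun x y => if x.1 = y.1 ∧ (x.2 : ℕ) + k = (y.2 : ℕ) then 1 else 0

lemma jordan_pow (k : ℕ) : jordanNilMatrix L l m ^ k = shiftPow L l m k := by
  induction k with
  | zero =>
    ext x y
    rw [pow_zero, shiftPow, Matrix.one_apply]
    by_cases h : x = y
    · subst h; rw [if_pos rfl, if_pos ⟨rfl, by omega⟩]
    · rw [if_neg h, if_neg]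
      rintro ⟨h1, h2⟩
      exact h (JIdx.ext (by rw [h1]) (by rw [h1]) (by omega))
  | succ k ih =>
    ext x z
    rw [pow_succ, ih, mul_jordan_apply]
    by_cases hz : 0 < (z.2 : ℕ)
    · rw [if_pos hz, shiftPow, shiftPow]
      unfold JIdx.pred
      by_cases h1 : x.1 = z.1
      · have hb : (x.2 : ℕ) < (x.1.1 : ℕ) + 1 := x.2.isLt
        by_cases h2 : (x.2 : ℕ) + k = (z.2 : ℕ) - 1
        · rw [if_pos ⟨h1, h2⟩, if_pos ⟨h1, by omega⟩]
        · rw [if_neg (by rintro ⟨-, h⟩; simp only at h; omega), if_neg (by rintro ⟨-, h⟩; omega)]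
      · rw [if_neg (by rintro ⟨h, -⟩; exact h1 h), if_neg (by rintro ⟨h, -⟩; exact h1 h)]
    · rw [if_neg hz, shiftPow, eq_comm, if_neg]
      rintro ⟨-, h2⟩
      omega

/-- `{j : Fin s // k ≤ j} ≃ Fin (s - k)` -/
def finSubEquiv (s k : ℕ) : {j : Fin s // k ≤ (j : ℕ)} ≃ Fin (s - k) where
  toFun j := ⟨(j.1 : ℕ) - k, by have := j.1.isLt; have := j.2; omega⟩
  invFun t := ⟨⟨(t : ℕ) + k, by have := t.isLt; omega⟩, by simp⟩
  left_inv j := by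
    ext
    simp only [Fin.val_mk]
    have := j.2
    omega
  right_inv t := by
    ext
    simp only [Fin.val_mk]
    omega

def sigmaSubtypeEquiv {α : Type*} {β : α → Type*} (p : ∀ a, β a → Prop) :
    {x : Σ a, β a // p x.1 x.2} ≃ Σ a, {b : β a // p a b} where
  toFun x := ⟨x.1.1, x.1.2, x.2⟩
  invFun y := ⟨⟨y.1, y.2.1⟩, y.2.2⟩
  left_inv x := rfl
  right_inv y := rfl

lemma shiftPow_transpose_mul_self (k : ℕ) :
    (shiftPow L l m k)ᵀ * shiftPow L l m k
      = diagonal (fun x : JIdx l m => if k ≤ (x.2 : ℕ) then (1 : L) else 0) := by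
  ext x z
  rw [Matrix.mul_apply]
  simp only [transpose_apply, shiftPow, diagonal_apply]
  by_cases hx : k ≤ (x.2 : ℕ)
  · have hxx : ((x.2 : ℕ) - k) < (x.1.1 : ℕ) + 1 := by have := x.2.isLt; omega
    refine (Fintype.sum_eq_single (⟨x.1, ⟨(x.2 : ℕ) - k, hxx⟩⟩ : JIdx l m) ?_).trans ?_
    · intro y hy
      rw [if_neg, zero_mul]
      rintro ⟨h1, h2⟩
      exact hy (JIdx.ext (by rw [h1]) (by rw [h1])
        (by simp only [Fin.val_mk]; omega))
    · rw [if_pos ⟨rfl, by simp only [Fin.val_mk]; omega⟩, one_mul]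
      by_cases hxz : x = z
      · subst hxz
        rw [if_pos ⟨rfl, by simp only [Fin.val_mk]; omega⟩, if_pos rfl, if_pos hx]
      · rw [if_neg hxz, if_neg]
        rintro ⟨h1, h2⟩
        exact hxz (JIdx.ext (by rw [h1]) (by rw [h1])
          (by simp only [Fin.val_mk] at h2; omega))
  · have hz : ∀ y : JIdx l m,
        (if y.1 = x.1 ∧ (y.2 : ℕ) + k = (x.2 : ℕ) then (1:L) else 0)
          * (if y.1 = z.1 ∧ (y.2 : ℕ) + k = (z.2 : ℕ) then (1:L) else 0) = 0 := by
      intro y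
      rw [if_neg, zero_mul]
      rintro ⟨-, h2⟩
      omega
    rw [Finset.sum_congr rfl (fun y _ => hz y), Finset.sum_const, smul_zero]
    by_cases hxz : x = z
    · rw [if_pos hxz, if_neg hx]
    · rw [if_neg hxz]

lemma shiftPow_mul_eq_self (k : ℕ) :
    shiftPow L l m k * ((shiftPow L l m k)ᵀ * shiftPow L l m k) = shiftPow L l m k := by
  rw [shiftPow_transpose_mul_self]
  ext x z
  rw [mul_diagonal]
  simp only [shiftPow]
  by_cases h : x.1 = z.1 ∧ (x.2 : ℕ) + k = (z.2 : ℕ)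
  · rw [if_pos h, if_pos (by omega), mul_one]
  · rw [if_neg h, zero_mul]

lemma rank_shiftPow (k : ℕ) :
    (shiftPow L l m k).rank = ∑ p : Σ n : Fin l, Fin (m n), ((p.1 : ℕ) + 1 - k) := by
  classical
  have h1 : (shiftPow L l m k).rank
      = ((shiftPow L l m k)ᵀ * shiftPow L l m k).rank := by
    apply le_antisymm
    · conv_lhs => rw [← shiftPow_mul_eq_self (L := L) (l := l) (m := m) k]
      exact rank_mul_le_right _ _
    · exact rank_mul_le_right _ _
  rw [h1, shiftPow_transpose_mul_self, rank_diagonal]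
  have e1 : {x : JIdx l m // (if k ≤ (x.2 : ℕ) then (1 : L) else 0) ≠ 0}
      ≃ {x : JIdx l m // k ≤ (x.2 : ℕ)} := by
    apply Equiv.subtypeEquivRight
    intro x
    by_cases h : k ≤ (x.2 : ℕ) <;> simp [h]
  rw [Fintype.card_congr (e1.trans
    (sigmaSubtypeEquiv (fun (p : Σ n : Fin l, Fin (m n)) (j : Fin ((p.1 : ℕ) + 1)) => k ≤ (j : ℕ)))),
    Fintype.card_sigma]
  apply Finset.sum_congr rfl
  intro p _
  rw [Fintype.card_congr (finSubEquiv ((p.1 : ℕ) + 1) k), Fintype.card_fin]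
end
section SkewRank

variable {L : Type*} [Field L]

def prodSubmoduleEquiv {V W : Type*} [AddCommGroup V] [AddCommGroup W]
    [Module L V] [Module L W] (p : Submodule L V) (q : Submodule L W) :
    (p.prod q) ≃ₗ[L] p × q where
  toFun x := (⟨x.1.1, x.2.1⟩, ⟨x.1.2, x.2.2⟩)
  invFun y := ⟨(y.1.1, y.2.1), y.1.2, y.2.2⟩
  map_add' x y := rfl
  map_smul' c x := rfl
  left_inv x := rfl
  right_inv y := rfl

lemma rank_fromBlocks_diag {α β : Type*} [Fintype α] [Fintype β] [DecidableEq α]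
    [DecidableEq β] (B : Matrix α α L) (D : Matrix β β L) :
    (fromBlocks B 0 0 D).rank = B.rank + D.rank := by
  classical
  let e := LinearEquiv.sumArrowLequivProdArrow α β L L
  let P := B.mulVecLin.prodMap D.mulVecLin
  have hM : (fromBlocks B 0 0 D).mulVecLin
      = (e.symm.toLinearMap ∘ₗ P) ∘ₗ e.toLinearMap := by
    apply LinearMap.ext
    intro v
    show fromBlocks B 0 0 D *ᵥ v = _
    funext x
    cases x with
    | inl x =>
      simp [fromBlocks_mulVec, P, e, LinearEquiv.sumArrowLequivProdArrow, Equiv.sumArrowEquivProdArrow]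
    | inr x =>
      simp [fromBlocks_mulVec, P, e, LinearEquiv.sumArrowLequivProdArrow, Equiv.sumArrowEquivProdArrow]
  have hP : LinearMap.range P
      = (LinearMap.range B.mulVecLin).prod (LinearMap.range D.mulVecLin) := by
    ext x
    simp only [LinearMap.mem_range, Submodule.mem_prod]
    constructor
    · rintro ⟨⟨u, v⟩, h⟩
      rw [← h]
      exact ⟨⟨u, rfl⟩, ⟨v, rfl⟩⟩
    · rintro ⟨⟨u, hu⟩, ⟨v, hv⟩⟩
      exact ⟨(u, v), Prod.ext (by simpa [P] using hu) (by simpa [P] using hv)⟩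
  rw [Matrix.rank, hM, LinearMap.range_comp, LinearEquiv.range, Submodule.map_top,
    LinearMap.range_comp, LinearEquiv.finrank_map_eq, hP]
  rw [LinearEquiv.finrank_eq (prodSubmoduleEquiv _ _), Module.finrank_prod]
  rfl

theorem skew_rank_even (hchar : ringChar L ≠ 2) :
    ∀ (N : ℕ) (ι : Type) [Fintype ι] [DecidableEq ι] (S : Matrix ι ι L),
      Fintype.card ι ≤ N → Sᵀ = -S → Even S.rank := by
  intro N
  induction N with
  | zero =>
    intro ι _ _ S hcard hskew
    have hempty : IsEmpty ι := Fintype.card_eq_zero_iff.mp (Nat.le_zero.mp hcard)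
    have hS : S = 0 := by ext i j; exact hempty.elim i
    rw [hS, rank_zero]
    exact Even.zero
  | succ N IH =>
    intro ι _ _ S hcard hskew
    by_cases hS : S = 0
    · rw [hS, rank_zero]; exact Even.zero
    have hskew' : ∀ a b, S b a = -S a b := by
      intro a b
      have := congrFun (congrFun hskew a) b
      simpa using this
    have hdiag : ∀ i, S i i = 0 := by
      intro i
      have h2 : S i i + S i i = 0 := by
        nth_rewrite 1 [hskew' i i]
        exact neg_add_cancel _
      have h3 : (2 : L) * S i i = 0 := by rw [two_mul]; exact h2
      rcases mul_eq_zero.mp h3 with h | h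
      · exact absurd h (Ring.two_ne_zero hchar)
      · exact h
    obtain ⟨i, j, hij0⟩ : ∃ i j, S i j ≠ 0 := by
      by_contra h
      push_neg at h
      exact hS (by ext i j; exact h i j)
    have hij : i ≠ j := by
      intro h
      subst h
      exact hij0 (hdiag i)
    let e : (Fin 2 ⊕ {x : ι // x ≠ i ∧ x ≠ j}) ≃ ι :=
      { toFun := Sum.elim (fun t => if t = 0 then i else j) Subtype.val
        invFun := fun x => if h1 : x = i then Sum.inl 0 else if h2 : x = j then Sum.inl 1
          else Sum.inr ⟨x, h1, h2⟩
        left_inv := by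
          rintro (t | ⟨x, hx1, hx2⟩)
          · fin_cases t
            · simp
            · simp [hij.symm]
          · simp [hx1, hx2]
        right_inv := by
          intro x
          by_cases h1 : x = i
          · subst h1; simp
          · by_cases h2 : x = j
            · subst h2; simp [h1]
            · simp [h1, h2] }
    have hcard2 : Fintype.card {x : ι // x ≠ i ∧ x ≠ j} ≤ N := by
      have : Fintype.card {x : ι // x ≠ i ∧ x ≠ j} < Fintype.card ι :=
        Fintype.card_subtype_lt (x := i) (by simp)
      omega
    set S' := S.submatrix e e with hS'def
    have hskew'' : ∀ a b, S' b a = -S' a b := fun a b => hskew' _ _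
    set B := S'.toBlocks₁₁ with hBdef
    set C := S'.toBlocks₁₂ with hCdef
    set D := S'.toBlocks₂₂ with hDdef
    have h21 : S'.toBlocks₂₁ = -Cᵀ := by
      ext x y
      show S' (Sum.inr x) (Sum.inl y) = -(S' (Sum.inl y) (Sum.inr x))
      exact hskew'' _ _
    have hblocks : S' = fromBlocks B C (-Cᵀ) D := by
      rw [← h21, hBdef, hCdef, hDdef, fromBlocks_toBlocks]
    have hB01 : B 0 1 = S i j := by
      show S' (Sum.inl 0) (Sum.inl 1) = S i j
      simp [hS'def, e]
    have hB10 : B 1 0 = -(S i j) := by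
      show S' (Sum.inl 1) (Sum.inl 0) = -(S i j)
      rw [← hB01]
      exact hskew'' _ _
    have hB00 : B 0 0 = 0 := by
      show S' (Sum.inl 0) (Sum.inl 0) = 0
      simp [hS'def, e, hdiag]
    have hB11 : B 1 1 = 0 := by
      show S' (Sum.inl 1) (Sum.inl 1) = 0
      simp [hS'def, e, hdiag]
    have hdetB : IsUnit B.det := by
      rw [Matrix.det_fin_two, hB00, hB11, hB01, hB10]
      simp only [zero_mul, mul_neg, zero_sub, neg_neg]
      exact (mul_ne_zero hij0 hij0).isUnit
    have hBt : Bᵀ = -B := by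
      ext x y
      show S' (Sum.inl y) (Sum.inl x) = -(S' (Sum.inl x) (Sum.inl y))
      exact hskew'' _ _
    have hBinvT : B⁻¹ᵀ = -(B⁻¹) := by
      rw [Matrix.transpose_nonsing_inv, hBt]
      exact Matrix.inv_eq_left_inv (by rw [neg_mul_neg, Matrix.nonsing_inv_mul _ hdetB])
    set E : Matrix (Fin 2 ⊕ {x : ι // x ≠ i ∧ x ≠ j})
        (Fin 2 ⊕ {x : ι // x ≠ i ∧ x ≠ j}) L := fromBlocks 1 (-(B⁻¹ * C)) 0 1 with hEdef
    have hdetE : IsUnit E.det := by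
      rw [hEdef, det_fromBlocks_zero₂₁]
      simp
    set D₂ := Cᵀ * (B⁻¹ * C) + D with hD₂def
    have hSE : S' * E = fromBlocks B 0 (-Cᵀ) D₂ := by
      rw [hblocks, hEdef, fromBlocks_multiply, hD₂def]
      simp only [Matrix.mul_one, Matrix.mul_zero, add_zero, Matrix.mul_neg, Matrix.neg_mul,
        neg_neg, ← Matrix.mul_assoc, Matrix.mul_nonsing_inv _ hdetB, Matrix.one_mul,
        neg_add_cancel]
    have hEt : Eᵀ = fromBlocks 1 0 (-(Cᵀ * B⁻¹ᵀ)) 1 := by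
      rw [hEdef]
      simp only [fromBlocks_transpose, transpose_one, transpose_zero, transpose_neg,
        transpose_mul]
    have hfinal : Eᵀ * (S' * E) = fromBlocks B 0 0 D₂ := by
      rw [hSE, hEt, fromBlocks_multiply]
      simp only [Matrix.one_mul, Matrix.zero_mul, Matrix.mul_zero, add_zero, zero_add,
        hBinvT, Matrix.mul_neg, Matrix.neg_mul, neg_neg, Matrix.mul_assoc,
        Matrix.nonsing_inv_mul _ hdetB, Matrix.mul_one, neg_add_cancel, add_neg_cancel, neg_zero]
    have hDt : Dᵀ = -D := by
      ext x y
      show S' (Sum.inr y) (Sum.inr x) = -(S' (Sum.inr x) (Sum.inr y))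
      exact hskew'' _ _
    have hD₂skew : D₂ᵀ = -D₂ := by
      rw [hD₂def]
      simp only [transpose_add, transpose_mul, transpose_transpose, hBinvT, hDt,
        Matrix.mul_neg, Matrix.neg_mul, neg_neg, Matrix.mul_assoc, neg_add]
    have hrank : S.rank = 2 + D₂.rank := by
      rw [← rank_submatrix S e e, ← hS'def]
      have h1 : S'.rank = (Eᵀ * (S' * E)).rank := by
        rw [rank_mul_eq_right_of_isUnit_det _ _ (by rwa [Matrix.det_transpose]),
          rank_mul_eq_left_of_isUnit_det _ _ hdetE]
      rw [h1, hfinal, rank_fromBlocks_diag]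
      congr 1
      rw [rank_of_isUnit _ ((Matrix.isUnit_iff_isUnit_det _).mpr hdetB), Fintype.card_fin]
    rw [hrank]
    exact even_two.add (IH {x : ι // x ≠ i ∧ x ≠ j} D₂ hcard2 hD₂skew)

end SkewRank
section Forward
variable {L : Type*} [Field L] {l : ℕ} {m : Fin l → ℕ}

lemma anticommute_pow (A : Matrix (JIdx l m) (JIdx l m) L)
    (h : A * jordanNilMatrix L l m = -((jordanNilMatrix L l m)ᵀ * A)) (k : ℕ) :
    A * jordanNilMatrix L l m ^ k
      = ((-1 : L) ^ k) • ((jordanNilMatrix L l m)ᵀ ^ k * A) := by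
  induction k with
  | zero => simp
  | succ k ih =>
    rw [pow_succ, ← Matrix.mul_assoc, ih, Matrix.smul_mul, Matrix.mul_assoc, h,
      Matrix.mul_neg, pow_succ ((jordanNilMatrix L l m)ᵀ), pow_succ (-1 : L),
      mul_smul, neg_one_smul, Matrix.mul_assoc, smul_neg]

lemma even_rank_pow (hchar : ringChar L ≠ 2) (A : Matrix (JIdx l m) (JIdx l m) L)
    (hU : IsUnit A) (hsk : Aᵀ = -A)
    (h : A * jordanNilMatrix L l m = -((jordanNilMatrix L l m)ᵀ * A))
    (k : ℕ) (hk : Even k) : Even ((jordanNilMatrix L l m ^ k).rank) := by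
  have h1 := anticommute_pow A h k
  rw [hk.neg_one_pow, one_smul] at h1
  have h2 : (A * jordanNilMatrix L l m ^ k)ᵀ = -(A * jordanNilMatrix L l m ^ k) := by
    rw [transpose_mul, transpose_pow, hsk, Matrix.mul_neg, ← h1]
  have h3 : (A * jordanNilMatrix L l m ^ k).rank = (jordanNilMatrix L l m ^ k).rank :=
    rank_mul_eq_right_of_isUnit_det _ _ ((Matrix.isUnit_iff_isUnit_det _).mp hU)
  rw [← h3]
  exact skew_rank_even hchar (Fintype.card (JIdx l m)) (JIdx l m) _ le_rfl h2

lemma forward_direction (hchar : ringChar L ≠ 2)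
    (A : Matrix (JIdx l m) (JIdx l m) L) (hU : IsUnit A) (hsk : Aᵀ = -A)
    (h : A * jordanNilMatrix L l m = -((jordanNilMatrix L l m)ᵀ * A)) :
    ∀ n : Fin l, Odd ((n : ℕ) + 1) → Even (m n) := by
  intro n hodd
  have hEn : Even (n : ℕ) := by rcases hodd with ⟨t, ht⟩; exact ⟨t, by omega⟩
  have hr : ∀ k, Even k →
      Even (∑ p : Σ n' : Fin l, Fin (m n'), ((p.1 : ℕ) + 1 - k)) := by
    intro k hk
    have h5 := even_rank_pow hchar A hU hsk h k hk
    rwa [jordan_pow, rank_shiftPow] at h5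
  have h1 := hr (n : ℕ) hEn
  have h2 := hr ((n : ℕ) + 2) (by rcases hEn with ⟨t, ht⟩; exact ⟨t + 1, by omega⟩)
  have h3 : Even (∑ p : Σ n' : Fin l, Fin (m n'),
      (((p.1 : ℕ) + 1 - (n : ℕ)) + ((p.1 : ℕ) + 1 - ((n : ℕ) + 2)))) := by
    rw [Finset.sum_add_distrib]
    exact h1.add h2
  rw [← Finset.univ_sigma_univ, Finset.sum_sigma] at h3
  simp only [Finset.sum_const, Finset.card_univ, Fintype.card_fin, smul_eq_mul] at h3
  rw [← Finset.add_sum_erase _ _ (Finset.mem_univ n)] at h3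
  have hcn : ((n : ℕ) + 1 - (n : ℕ)) + ((n : ℕ) + 1 - ((n : ℕ) + 2)) = 1 := by omega
  rw [hcn, mul_one] at h3
  have hrest : Even (∑ n' ∈ Finset.univ.erase n,
      m n' * (((n' : ℕ) + 1 - (n : ℕ)) + ((n' : ℕ) + 1 - ((n : ℕ) + 2)))) := by
    apply Finset.even_sum
    intro c hc
    have hcn' : (c : ℕ) ≠ (n : ℕ) := fun hcc => (Finset.mem_erase.mp hc).1 (Fin.ext hcc)
    apply Even.mul_left
    by_cases hlt : (c : ℕ) < (n : ℕ)
    · exact ⟨0, by omega⟩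
    · exact ⟨(c : ℕ) - (n : ℕ), by omega⟩
  exact (Nat.even_add.mp h3).mpr hrest

end Forward
section Construction
variable {L : Type*} [Field L] {l : ℕ} {m : Fin l → ℕ}

/-- sign coefficient pairing copies of blocks -/
def sgnC (L : Type*) [Field L] (n c c' : ℕ) : L :=
  if Odd n then (if c = c' then 1 else 0)
  else if Even c ∧ c' = c + 1 then 1
  else if ¬Even c ∧ c' + 1 = c then -1 else 0

def pairN (n c : ℕ) : ℕ := if Odd n then c else (if Even c then c + 1 else c - 1)

lemma sgnC_odd {n : ℕ} (hn : Odd n) (c c' : ℕ) :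
    sgnC L n c c' = if c = c' then 1 else 0 := by
  unfold sgnC
  rw [if_pos hn]

lemma sgnC_even_1 {n : ℕ} (hn : ¬Odd n) {c c' : ℕ} (hc : Even c) (hcc : c' = c + 1) :
    sgnC L n c c' = 1 := by
  unfold sgnC
  rw [if_neg hn, if_pos ⟨hc, hcc⟩]

lemma sgnC_even_2 {n : ℕ} (hn : ¬Odd n) {c c' : ℕ} (hc : ¬Even c) (hcc : c' + 1 = c) :
    sgnC L n c c' = -1 := by
  unfold sgnC
  rw [if_neg hn, if_neg (fun hh => by omega), if_pos ⟨hc, hcc⟩]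

lemma sgnC_even_0 {n : ℕ} (hn : ¬Odd n) {c c' : ℕ} (h1 : ¬(Even c ∧ c' = c + 1))
    (h2 : ¬(¬Even c ∧ c' + 1 = c)) : sgnC L n c c' = 0 := by
  unfold sgnC
  rw [if_neg hn, if_neg h1, if_neg h2]

lemma sgnC_mul (n c : ℕ) :
    sgnC L n c (pairN n c) * sgnC L n (pairN n c) c = if Odd n then 1 else -1 := by
  by_cases hn : Odd n
  · rw [if_pos hn, sgnC_odd hn, sgnC_odd hn]
    unfold pairN
    rw [if_pos hn]
    norm_num
  · rw [if_neg hn]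
    have hpn : pairN n c = if Even c then c + 1 else c - 1 := by unfold pairN; rw [if_neg hn]
    by_cases hc : Even c
    · rw [hpn, if_pos hc]
      have hc1 : ¬Even (c + 1) := by simp [Nat.even_add_one, hc]
      rw [sgnC_even_1 hn hc rfl, sgnC_even_2 hn hc1 rfl, one_mul]
    · have hcpos : 1 ≤ c := by
        rcases Nat.even_or_odd c with h | h
        · exact absurd h hc
        · rcases h with ⟨t, ht⟩; omega
      have hc1 : Even (c - 1) := by
        rcases Nat.even_or_odd c with h | h
        · exact absurd h hc
        · rcases h with ⟨t, ht⟩; exact ⟨t, by omega⟩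
      rw [hpn, if_neg hc]
      rw [sgnC_even_2 hn hc (by omega), sgnC_even_1 hn hc1 (by omega)]
      norm_num

lemma sgnC_ne_zero {n c c' : ℕ} (h : sgnC L n c c' ≠ 0) : c' = pairN n c := by
  unfold pairN
  by_cases hn : Odd n
  · rw [sgnC_odd hn] at h
    rw [if_pos hn]
    by_cases hcc : c = c'
    · omega
    · rw [if_neg hcc] at h
      exact absurd rfl h
  · rw [if_neg hn]
    by_cases h1 : Even c ∧ c' = c + 1
    · rw [if_pos h1.1]
      omega
    · by_cases h2 : ¬Even c ∧ c' + 1 = c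
      · rw [if_neg h2.1]
        omega
      · exact absurd (sgnC_even_0 hn h1 h2) h

lemma sgnC_swap {n : ℕ} (hn : Even n) (c c' : ℕ) :
    sgnC L n c' c = -sgnC L n c c' := by
  have hn' : ¬Odd n := by
    rw [← Nat.not_even_iff_odd]
    exact not_not_intro hn
  by_cases e1 : c' = c + 1
  · subst e1
    by_cases hc : Even c
    · have hc1 : ¬Even (c + 1) := by simp [Nat.even_add_one, hc]
      rw [sgnC_even_1 hn' hc rfl, sgnC_even_2 hn' hc1 rfl]
    · have hc1 : Even (c + 1) := by simpa [Nat.even_add_one] using hc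
      rw [sgnC_even_0 hn' (fun hh => hc hh.1) (fun hh => by omega),
        sgnC_even_0 hn' (fun hh => by omega) (fun hh => hh.1 hc1), neg_zero]
  · by_cases e2 : c = c' + 1
    · subst e2
      by_cases hc : Even c'
      · have hc1 : ¬Even (c' + 1) := by simp [Nat.even_add_one, hc]
        rw [sgnC_even_1 hn' hc rfl, sgnC_even_2 hn' hc1 rfl]
        norm_num
      · have hc1 : Even (c' + 1) := by simpa [Nat.even_add_one] using hc
        rw [sgnC_even_0 hn' (fun hh => by omega) (fun hh => hh.1 hc1),
          sgnC_even_0 hn' (fun hh => hc hh.1) (fun hh => by omega), neg_zero]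
    · rw [sgnC_even_0 hn' (fun hh => e2 hh.2) (fun hh => e1 (by omega)),
        sgnC_even_0 hn' (fun hh => e1 hh.2) (fun hh => e2 (by omega)), neg_zero]

lemma pairN_lt {n M c : ℕ} (hc : c < M) (hpar : Odd n ∨ Even M) : pairN n c < M := by
  unfold pairN
  by_cases hn : Odd n
  · simpa [hn] using hc
  · rw [if_neg hn]
    rcases hpar with h | h
    · exact absurd h hn
    · rcases h with ⟨t, ht⟩
      by_cases hec : Even c
      · rcases hec with ⟨u, hu⟩
        rw [if_pos ⟨u, hu⟩]
        omega
      · rw [if_neg hec]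
        omega

lemma pairN_pairN (n c : ℕ) : pairN n (pairN n c) = c := by
  unfold pairN
  by_cases hn : Odd n
  · simp [hn]
  · rw [if_neg hn, if_neg hn]
    by_cases hec : Even c
    · rw [if_pos hec, if_neg (by simp [Nat.even_add_one, hec])]
      omega
    · have hc1 : 1 ≤ c := by
        rcases Nat.even_or_odd c with h | h
        · exact absurd h hec
        · rcases h with ⟨t, ht⟩; omega
      rw [if_neg hec, if_pos (by
        rcases Nat.even_or_odd c with h | h
        · exact absurd h hec
        · rcases h with ⟨t, ht⟩; exact ⟨t, by omega⟩)]
      omega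

lemma neg_one_pow_even {i j n : ℕ} (h : i + j = n) (hn : Even n) :
    ((-1 : L)) ^ j = (-1 : L) ^ i := by
  rcases Nat.even_or_odd i with hi | hi
  · have hj : Even j := by rcases hn with ⟨a, ha⟩; rcases hi with ⟨b, hb⟩; exact ⟨a - b, by omega⟩
    rw [hi.neg_one_pow, hj.neg_one_pow]
  · have hj : Odd j := by rcases hn with ⟨a, ha⟩; rcases hi with ⟨b, hb⟩; exact ⟨a - b - 1, by omega⟩
    rw [hi.neg_one_pow, hj.neg_one_pow]

lemma neg_one_pow_odd {i j n : ℕ} (h : i + j = n) (hn : Odd n) :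
    ((-1 : L)) ^ j = -(-1 : L) ^ i := by
  rcases Nat.even_or_odd i with hi | hi
  · have hj : Odd j := by rcases hn with ⟨a, ha⟩; rcases hi with ⟨b, hb⟩; exact ⟨a - b, by omega⟩
    rw [hi.neg_one_pow, hj.neg_one_pow]
    try norm_num
  · have hj : Even j := by rcases hn with ⟨a, ha⟩; rcases hi with ⟨b, hb⟩; exact ⟨a - b, by omega⟩
    rw [hi.neg_one_pow, hj.neg_one_pow]
    try norm_num

/-- the skew-symmetric matrix -/
def skewA (L : Type*) [Field L] (l : ℕ) (m : Fin l → ℕ) :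
    Matrix (JIdx l m) (JIdx l m) L :=
  fun x y => if (x.1.1 : ℕ) = (y.1.1 : ℕ) ∧ (x.2 : ℕ) + (y.2 : ℕ) = (x.1.1 : ℕ)
    then (-1 : L) ^ (x.2 : ℕ) * sgnC L (x.1.1 : ℕ) (x.1.2 : ℕ) (y.1.2 : ℕ) else 0

lemma skewA_transpose : (skewA L l m)ᵀ = -(skewA L l m) := by
  ext x y
  show skewA L l m y x = -(skewA L l m x y)
  unfold skewA
  by_cases hcond : (x.1.1 : ℕ) = (y.1.1 : ℕ) ∧ (x.2 : ℕ) + (y.2 : ℕ) = (x.1.1 : ℕ)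
  · obtain ⟨h1, h2⟩ := hcond
    rw [if_pos ⟨h1.symm, by omega⟩, if_pos ⟨h1, h2⟩]
    simp only [← h1]
    rcases Nat.even_or_odd (x.1.1 : ℕ) with hn | hn
    · rw [sgnC_swap hn, neg_one_pow_even (by omega : (x.2:ℕ) + (y.2:ℕ) = (x.1.1:ℕ)) hn]
      ring
    · have hsg : sgnC L (x.1.1 : ℕ) (y.1.2 : ℕ) (x.1.2 : ℕ)
          = sgnC L (x.1.1 : ℕ) (x.1.2 : ℕ) (y.1.2 : ℕ) := by
        unfold sgnC
        rw [if_pos hn, if_pos hn]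
        by_cases hcc : (x.1.2 : ℕ) = (y.1.2 : ℕ)
        · rw [if_pos hcc, if_pos hcc.symm]
        · rw [if_neg hcc, if_neg (fun hx => hcc hx.symm)]
      rw [hsg, neg_one_pow_odd (by omega : (x.2:ℕ) + (y.2:ℕ) = (x.1.1:ℕ)) hn]
      ring
  · rw [if_neg, if_neg hcond, neg_zero]
    rintro ⟨h1, h2⟩
    exact hcond ⟨h1.symm, by omega⟩

lemma skewA_mul_self (h : ∀ n : Fin l, Odd ((n : ℕ) + 1) → Even (m n)) :
    skewA L l m * skewA L l m = -1 := by
  ext x z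
  rw [Matrix.mul_apply]
  obtain ⟨⟨n, c⟩, i⟩ := x
  have hbound : (i : ℕ) ≤ (n : ℕ) := by have := i.isLt; simp only [] at this; omega
  have hpar : Odd (n : ℕ) ∨ Even (m n) := by
    rcases Nat.even_or_odd (n : ℕ) with he | ho
    · exact Or.inr (h n (by rcases he with ⟨t, ht⟩; exact ⟨t, by omega⟩))
    · exact Or.inl ho
  have hy0lt : pairN (n : ℕ) (c : ℕ) < m n := pairN_lt c.isLt hpar
  have hilt : (n : ℕ) - (i : ℕ) < (n : ℕ) + 1 := by omega
  have hside : ∀ y : JIdx l m,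
      y ≠ ⟨⟨n, ⟨pairN (n : ℕ) (c : ℕ), hy0lt⟩⟩, ⟨(n : ℕ) - (i : ℕ), hilt⟩⟩ →
      skewA L l m ⟨⟨n, c⟩, i⟩ y * skewA L l m y z = 0 := by
    intro y hy
    obtain ⟨⟨ny, cy⟩, jy⟩ := y
    unfold skewA
    dsimp only
    by_cases h1 : (n : ℕ) = (ny : ℕ) ∧ (i : ℕ) + (jy : ℕ) = (n : ℕ)
    · rw [if_pos h1]
      by_cases h2 : sgnC L (n : ℕ) (c : ℕ) (cy : ℕ) = 0
      · rw [h2, mul_zero, zero_mul]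
      · exact absurd (JIdx.ext (by simpa using h1.1.symm)
          (by simpa using sgnC_ne_zero h2) (by (try simp only [Fin.val_mk]); omega)) hy
    · rw [if_neg h1, zero_mul]
  rw [Fintype.sum_eq_single _ hside]
  unfold skewA
  dsimp only
  rw [if_pos ⟨rfl, by (try simp only [Fin.val_mk]); omega⟩]
  by_cases hxz : (⟨⟨n, c⟩, i⟩ : JIdx l m) = z
  · subst hxz
    rw [Matrix.neg_apply, Matrix.one_apply_eq]
    dsimp only
    rw [if_pos ⟨rfl, by (try simp only [Fin.val_mk]); omega⟩]
    try simp only [Fin.val_mk]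
    have hmul := sgnC_mul (L := L) (n : ℕ) (c : ℕ)
    have hpow : ((-1 : L) ^ (i : ℕ)) * ((-1 : L) ^ ((n : ℕ) - (i : ℕ)))
        = (-1 : L) ^ (n : ℕ) := by rw [← pow_add]; congr 1; omega
    have key : ((-1 : L) ^ (i : ℕ) * sgnC L (n : ℕ) (c : ℕ) (pairN (n : ℕ) (c : ℕ)))
        * ((-1 : L) ^ ((n : ℕ) - (i : ℕ))
          * sgnC L (n : ℕ) (pairN (n : ℕ) (c : ℕ)) (c : ℕ))
        = ((-1 : L) ^ (n : ℕ)) * (if Odd (n : ℕ) then (1 : L) else -1) := by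
      rw [← hmul, ← hpow]; ring
    rw [key]
    rcases Nat.even_or_odd (n : ℕ) with hn | hn
    · rw [if_neg (Nat.not_odd_iff_even.mpr hn), hn.neg_one_pow]
      norm_num
    · rw [if_pos hn, hn.neg_one_pow]
      norm_num
  · rw [Matrix.neg_apply, Matrix.one_apply_ne hxz, neg_zero]
    obtain ⟨⟨nz, cz⟩, jz⟩ := z
    dsimp only
    by_cases h2 : (n : ℕ) = (nz : ℕ) ∧ ((n : ℕ) - (i : ℕ)) + (jz : ℕ) = (n : ℕ)
    · rw [if_pos (by simpa using h2)]
      by_cases h3 : sgnC L (n : ℕ) (pairN (n : ℕ) (c : ℕ)) (cz : ℕ) = 0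
      · rw [h3, mul_zero, mul_zero]
      · exfalso
        apply hxz
        have hcz := sgnC_ne_zero h3
        rw [pairN_pairN] at hcz
        exact JIdx.ext (by simpa using h2.1) (by simpa using hcz.symm) (by (try simp only [Fin.val_mk]); omega)
    · rw [if_neg (by simpa using h2), mul_zero]

lemma skewA_isUnit (h : ∀ n : Fin l, Odd ((n : ℕ) + 1) → Even (m n)) :
    IsUnit (skewA L l m) := by
  refine ⟨⟨skewA L l m, -(skewA L l m), ?_, ?_⟩, rfl⟩
  · rw [Matrix.mul_neg, skewA_mul_self h, neg_neg]
  · rw [Matrix.neg_mul, skewA_mul_self h, neg_neg]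

lemma skewA_anticomm : skewA L l m * jordanNilMatrix L l m
    = -((jordanNilMatrix L l m)ᵀ * skewA L l m) := by
  ext x z
  rw [mul_jordan_apply, Matrix.neg_apply, jordanT_mul_apply]
  obtain ⟨⟨n, c⟩, i⟩ := x
  obtain ⟨⟨nz, cz⟩, jz⟩ := z
  have hb1 : (i : ℕ) ≤ (n : ℕ) := by have := i.isLt; simp only [] at this; omega
  have hb2 : (jz : ℕ) ≤ (nz : ℕ) := by have := jz.isLt; simp only [] at this; omega
  unfold JIdx.pred skewA
  dsimp only
  by_cases hz : 0 < (jz : ℕ) <;> by_cases hx : 0 < (i : ℕ)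
  · rw [if_pos hz, if_pos hx]
    try simp only [Fin.val_mk]
    by_cases hc : (n : ℕ) = (nz : ℕ) ∧ (i : ℕ) + ((jz : ℕ) - 1) = (n : ℕ)
    · rw [if_pos hc, if_pos ⟨hc.1, by omega⟩]
      have hp : ((-1 : L)) ^ (i : ℕ) = -(-1 : L) ^ ((i : ℕ) - 1) := by
        conv_lhs => rw [show (i : ℕ) = ((i : ℕ) - 1) + 1 by omega]
        rw [pow_succ]
        ring
      rw [hp]
      ring
    · rw [if_neg hc, if_neg, neg_zero]
      rintro ⟨h1, h2⟩
      exact hc ⟨h1, by omega⟩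
  · rw [if_pos hz, if_neg hx, neg_zero]
    try simp only [Fin.val_mk]
    rw [if_neg]
    rintro ⟨h1, h2⟩
    omega
  · rw [if_neg hz, if_pos hx, eq_comm, neg_eq_zero]
    try simp only [Fin.val_mk]
    rw [if_neg]
    rintro ⟨h1, h2⟩
    omega
  · rw [if_neg hz, if_neg hx, neg_zero]

end Construction

theorem exists_invertible_skewSymmetric_anticommuting_iff
    {L : Type*} [Field L] (hchar : ringChar L ≠ 2) (l : ℕ) (m : Fin l → ℕ) :
    (∃ A : Matrix (Σ p : Σ n : Fin l, Fin (m n), Fin ((p.1 : ℕ) + 1))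
             (Σ p : Σ n : Fin l, Fin (m n), Fin ((p.1 : ℕ) + 1)) L,
        IsUnit A ∧ Aᵀ = -A ∧
          A * jordanNilMatrix L l m = -((jordanNilMatrix L l m)ᵀ * A)) ↔
      ∀ n : Fin l, Odd ((n : ℕ) + 1) → Even (m n) := by
  constructor
  · rintro ⟨A, hU, hsk, hanti⟩
    exact forward_direction hchar A hU hsk hanti
  · intro h
    exact ⟨skewA L l m, skewA_isUnit h, skewA_transpose, skewA_anticomm⟩
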